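/- arXiv:1112.1993 — 2 statements merged into one kernel-verified Lean document; each statement's English description precedes it below -/
import Mathlib

section
/- Let X be a nonempty finite subset of ℝ^n and σ > 0, with kernel density estimator f and mean shift map m as defined. A point y ∈ ℝ^n is a fixed point of the mean shift map (m(y) = y) if and only if y is a critical point of f (∇f(y) = 0). -/
open scoped BigOperators

/-- Gaussian kernel: density of the multivariate normal distribution on `ℝ^n`
with mean `x` and covariance matrix `σ² I`. -/
noncomputable def gaussKernel (n : ℕ) (σ : ℝ) (x y : EuclideanSpace ℝ (Fin n)) : ℝ :=
  (2 * Real.pi * σ ^ 2) ^ (-(n : ℝ) / 2) * Real.exp (-‖y - x‖ ^ 2 / (2 * σ ^ 2))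

/-- Kernel density estimator `f(y) = |X|⁻¹ Σ_{x ∈ X} ψ_{x,σ}(y)`. -/
noncomputable def kde (n : ℕ) (σ : ℝ) (X : Finset (EuclideanSpace ℝ (Fin n)))
    (y : EuclideanSpace ℝ (Fin n)) : ℝ :=
  (X.card : ℝ)⁻¹ * ∑ x ∈ X, gaussKernel n σ x y

/-- Mean shift map `m(y) = (Σ_{x∈X} ψ_{x,σ}(y) x) / (Σ_{x∈X} ψ_{x,σ}(y))`. -/
noncomputable def meanShift (n : ℕ) (σ : ℝ) (X : Finset (EuclideanSpace ℝ (Fin n)))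
    (y : EuclideanSpace ℝ (Fin n)) : EuclideanSpace ℝ (Fin n) :=
  (∑ x ∈ X, gaussKernel n σ x y)⁻¹ • ∑ x ∈ X, gaussKernel n σ x y • x


open InnerProductSpace

lemma gaussKernel_pos (n : ℕ) (σ : ℝ) (hσ : 0 < σ) (x y : EuclideanSpace ℝ (Fin n)) :
    0 < gaussKernel n σ x y := by
  apply mul_pos _ (Real.exp_pos _)
  apply Real.rpow_pos_of_pos
  positivity

lemma hasGradientAt_gauss (n : ℕ) (σ : ℝ) (hσ : 0 < σ) (x y : EuclideanSpace ℝ (Fin n)) :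
    HasGradientAt (gaussKernel n σ x) ((gaussKernel n σ x y / σ ^ 2) • (x - y)) y := by
  rw [hasGradientAt_iff_hasFDerivAt]
  have h1 : HasFDerivAt (fun y : EuclideanSpace ℝ (Fin n) => y - x)
      (ContinuousLinearMap.id ℝ _) y := (hasFDerivAt_id y).sub_const x
  have hsq := h1.norm_sq
  set c : ℝ := (2 * Real.pi * σ ^ 2) ^ (-(n : ℝ) / 2) with hc
  have hφ : HasDerivAt (fun t : ℝ => c * Real.exp (-t / (2 * σ ^ 2)))
      (c * Real.exp (-‖y - x‖ ^ 2 / (2 * σ ^ 2)) * (-1 / (2 * σ ^ 2)))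
      (‖y - x‖ ^ 2) := by
    have : HasDerivAt (fun t : ℝ => -t / (2 * σ ^ 2)) (-1 / (2 * σ ^ 2))
        (‖y - x‖ ^ 2) := ((hasDerivAt_id _).neg).div_const _
    simpa [mul_comm, mul_assoc, mul_left_comm] using (this.exp.const_mul c)
  have hcomp := hφ.comp_hasFDerivAt y hsq
  have hfun : (fun y : EuclideanSpace ℝ (Fin n) =>
      c * Real.exp (-‖y - x‖ ^ 2 / (2 * σ ^ 2))) = gaussKernel n σ x := rfl
  simp only [Function.comp_def] at hcomp
  rw [hfun] at hcomp
  refine hcomp.congr_fderiv ?_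
  ext v
  have hσ2 : (σ : ℝ) ^ 2 ≠ 0 := by positivity
  rw [ContinuousLinearMap.comp_id]
  simp only [toDual_apply_apply, ContinuousLinearMap.coe_smul', Pi.smul_apply, innerSL_apply_apply]
  rw [real_inner_smul_left, show x - y = -(y - x) by abel, inner_neg_left]
  rw [smul_eq_mul, nsmul_eq_mul, gaussKernel]
  generalize (inner ℝ (y - x) v : ℝ) = t
  generalize Real.exp (-‖y - x‖ ^ 2 / (2 * σ ^ 2)) = e
  push_cast
  field_simp
  rw [hc]; ring_nf

lemma hasGradientAt_kde (n : ℕ) (σ : ℝ) (hσ : 0 < σ) (X : Finset (EuclideanSpace ℝ (Fin n)))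
    (y : EuclideanSpace ℝ (Fin n)) :
    HasGradientAt (fun z => (X.card : ℝ)⁻¹ * ∑ x ∈ X, gaussKernel n σ x z)
      ((X.card : ℝ)⁻¹ • ∑ x ∈ X, (gaussKernel n σ x y / σ ^ 2) • (x - y)) y := by
  rw [hasGradientAt_iff_hasFDerivAt]
  have hs : HasFDerivAt (fun z => ∑ x ∈ X, gaussKernel n σ x z)
      (∑ x ∈ X, InnerProductSpace.toDual ℝ _ ((gaussKernel n σ x y / σ ^ 2) • (x - y))) y :=
    HasFDerivAt.fun_sum (fun x _ => (hasGradientAt_gauss n σ hσ x y).hasFDerivAt)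
  refine (hs.const_mul ((X.card : ℝ)⁻¹)).congr_fderiv ?_
  rw [map_smul, map_sum]


/-- `y` is a fixed point of the mean shift map iff `y` is a critical point of the
kernel density estimator `f`. -/
theorem meanShift_fixedPoint_iff_critical (n : ℕ) (X : Finset (EuclideanSpace ℝ (Fin n)))
    (hX : X.Nonempty) (σ : ℝ) (hσ : 0 < σ) (y : EuclideanSpace ℝ (Fin n)) :
    meanShift n σ X y = y ↔ gradient (kde n σ X) y = 0 := by
  have hS : 0 < ∑ x ∈ X, gaussKernel n σ x y :=
    Finset.sum_pos (fun x _ => gaussKernel_pos n σ hσ x y) hX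
  have hgrad : gradient (kde n σ X) y
      = (X.card : ℝ)⁻¹ • ∑ x ∈ X, (gaussKernel n σ x y / σ ^ 2) • (x - y) := by
    have := hasGradientAt_kde n σ hσ X y
    exact this.gradient
  have hcard : ((X.card : ℝ)⁻¹ : ℝ) ≠ 0 := by
    simp [Finset.card_ne_zero_of_mem hX.choose_spec]
  have hσ2 : (σ : ℝ) ^ 2 ≠ 0 := by positivity
  have hsum : (∑ x ∈ X, (gaussKernel n σ x y / σ ^ 2) • (x - y))
      = (σ ^ 2)⁻¹ • ((∑ x ∈ X, gaussKernel n σ x y • x) - (∑ x ∈ X, gaussKernel n σ x y) • y) := by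
    rw [Finset.sum_smul, smul_sub, Finset.smul_sum, Finset.smul_sum, ← Finset.sum_sub_distrib]
    refine Finset.sum_congr rfl (fun x _ => ?_)
    rw [smul_smul, div_eq_mul_inv, mul_comm, smul_sub, smul_smul]
  constructor
  · intro h
    rw [hgrad, hsum]
    have hx : (∑ x ∈ X, gaussKernel n σ x y • x) = (∑ x ∈ X, gaussKernel n σ x y) • y := by
      have := congrArg (fun v => (∑ x ∈ X, gaussKernel n σ x y) • v) h
      simp only [meanShift] at this
      rwa [smul_inv_smul₀ hS.ne'] at this
    rw [hx, sub_self, smul_zero, smul_zero]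
  · intro h
    rw [hgrad, hsum] at h
    rw [smul_smul] at h
    have hne : ((X.card : ℝ)⁻¹ * (σ ^ 2)⁻¹) ≠ 0 := by
      exact mul_ne_zero hcard (inv_ne_zero hσ2)
    have hz : (∑ x ∈ X, gaussKernel n σ x y • x) - (∑ x ∈ X, gaussKernel n σ x y) • y = 0 :=
      (smul_eq_zero.mp h).resolve_left hne
    have hx : (∑ x ∈ X, gaussKernel n σ x y • x) = (∑ x ∈ X, gaussKernel n σ x y) • y :=
      sub_eq_zero.mp hz
    rw [meanShift, hx, inv_smul_smul₀ hS.ne']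
end

section
/- Let X be a nonempty finite subset of ℝ^n and σ > 0, with kernel density estimator f and mean shift map m as defined. For any starting point y_0 ∈ ℝ^n, define the mean shift iterates y_{i+1} = m(y_i). Then the sequence of densities f(y_0), f(y_1), f(y_2), … is nondecreasing, bounded above by (2πσ²)^{−n/2}, and hence converges. -/
open scoped BigOperators

/-- The weighted mean minimizes the weighted sum of squared distances. -/
lemma weighted_mean_min {E : Type*} [NormedAddCommGroup E] [InnerProductSpace ℝ E]
    (X : Finset E) (w : E → ℝ) (hw : ∀ x ∈ X, 0 ≤ w x)
    (hS : (∑ x ∈ X, w x) ≠ 0) (z : E) :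
    ∑ x ∈ X, w x * ‖(∑ x ∈ X, w x)⁻¹ • (∑ x ∈ X, w x • x) - x‖ ^ 2
      ≤ ∑ x ∈ X, w x * ‖z - x‖ ^ 2 := by
  set S := ∑ x ∈ X, w x with hSdef
  set μ := S⁻¹ • (∑ x ∈ X, w x • x) with hμ
  have hSμ : S • μ = ∑ x ∈ X, w x • x := by
    rw [hμ, smul_smul, mul_inv_cancel₀ hS, one_smul]
  have key : ∀ x : E, ‖z - x‖ ^ 2
      = ‖z - μ‖ ^ 2 + 2 * (inner ℝ (z - μ) (μ - x) : ℝ) + ‖μ - x‖ ^ 2 := by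
    intro x
    have h : z - x = (z - μ) + (μ - x) := by abel
    rw [h, norm_add_sq_real]
  have hmid : ∑ x ∈ X, w x * (inner ℝ (z - μ) (μ - x) : ℝ) = 0 := by
    have : ∑ x ∈ X, w x * (inner ℝ (z - μ) (μ - x) : ℝ)
        = (inner ℝ (z - μ) (∑ x ∈ X, w x • (μ - x)) : ℝ) := by
      rw [inner_sum]
      exact Finset.sum_congr rfl fun x _ => by rw [inner_smul_right]
    rw [this]
    have hzero : ∑ x ∈ X, w x • (μ - x) = 0 := by
      have : ∑ x ∈ X, w x • (μ - x) = S • μ - ∑ x ∈ X, w x • x := by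
        simp [smul_sub, Finset.sum_sub_distrib, hSdef, Finset.sum_smul]
      rw [this, hSμ, sub_self]
    rw [hzero, inner_zero_right]
  have hexp : ∑ x ∈ X, w x * ‖z - x‖ ^ 2
      = S * ‖z - μ‖ ^ 2 + ∑ x ∈ X, w x * ‖μ - x‖ ^ 2 := by
    calc ∑ x ∈ X, w x * ‖z - x‖ ^ 2
        = ∑ x ∈ X, (w x * ‖z - μ‖ ^ 2 + w x * (2 * (inner ℝ (z - μ) (μ - x) : ℝ))
            + w x * ‖μ - x‖ ^ 2) := by
          refine Finset.sum_congr rfl fun x _ => ?_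
          rw [key x]; ring
      _ = S * ‖z - μ‖ ^ 2 + 2 * ∑ x ∈ X, w x * (inner ℝ (z - μ) (μ - x) : ℝ)
            + ∑ x ∈ X, w x * ‖μ - x‖ ^ 2 := by
          rw [Finset.sum_add_distrib, Finset.sum_add_distrib, ← Finset.sum_mul,
            Finset.mul_sum]
          congr 1
          congr 1
          exact Finset.sum_congr rfl fun x _ => by ring
      _ = S * ‖z - μ‖ ^ 2 + ∑ x ∈ X, w x * ‖μ - x‖ ^ 2 := by rw [hmid]; ring
  have hSnn : 0 ≤ S := Finset.sum_nonneg hw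
  nlinarith [sq_nonneg ‖z - μ‖, mul_nonneg hSnn (sq_nonneg ‖z - μ‖)]

lemma kde_le_kde_meanShift (n : ℕ) (X : Finset (EuclideanSpace ℝ (Fin n))) (hX : X.Nonempty)
    (σ : ℝ) (hσ : 0 < σ) (y : EuclideanSpace ℝ (Fin n)) :
    kde n σ X y ≤ kde n σ X (meanShift n σ X y) := by
  have hc0 : (0:ℝ) < (2 * Real.pi * σ ^ 2) ^ (-(n : ℝ) / 2) :=
    Real.rpow_pos_of_pos (by positivity) _
  set c : ℝ := (2 * Real.pi * σ ^ 2) ^ (-(n : ℝ) / 2) with hc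
  set w : EuclideanSpace ℝ (Fin n) → ℝ := fun x => gaussKernel n σ x y with hw
  have hwpos : ∀ x, 0 < w x := fun x => mul_pos hc0 (Real.exp_pos _)
  have hSpos : 0 < ∑ x ∈ X, w x := Finset.sum_pos (fun x _ => hwpos x) hX
  set z := meanShift n σ X y with hz
  have h2σ : (0:ℝ) < 2 * σ ^ 2 := by positivity
  have hmin : ∑ x ∈ X, w x * ‖z - x‖ ^ 2 ≤ ∑ x ∈ X, w x * ‖y - x‖ ^ 2 := by
    have := weighted_mean_min X w (fun x _ => (hwpos x).le) hSpos.ne' y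
    simpa [hz, meanShift, hw] using this
  have hpt : ∀ x ∈ X,
      w x * ((‖y - x‖ ^ 2 - ‖z - x‖ ^ 2) / (2 * σ ^ 2))
        ≤ gaussKernel n σ x z - gaussKernel n σ x y := by
    intro x _
    set a := ‖y - x‖ ^ 2
    set b := ‖z - x‖ ^ 2
    set t := (a - b) / (2 * σ ^ 2) with ht
    have hexp : t + 1 ≤ Real.exp t := Real.add_one_le_exp t
    have hrw : -b / (2 * σ ^ 2) = -a / (2 * σ ^ 2) + t := by
      rw [ht]; ring
    have : gaussKernel n σ x z = c * (Real.exp (-a / (2 * σ ^ 2)) * Real.exp t) := by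
      rw [gaussKernel, hrw, Real.exp_add]
    rw [this]
    have hgy : gaussKernel n σ x y = c * Real.exp (-a / (2 * σ ^ 2)) := rfl
    rw [hgy]
    have hE : (0:ℝ) < Real.exp (-a / (2 * σ ^ 2)) := Real.exp_pos _
    have hwx : w x = c * Real.exp (-a / (2 * σ ^ 2)) := rfl
    rw [hwx]
    nlinarith [mul_pos hc0 hE]
  have hsum : (∑ x ∈ X, w x * ((‖y - x‖ ^ 2 - ‖z - x‖ ^ 2) / (2 * σ ^ 2)))
      ≤ ∑ x ∈ X, (gaussKernel n σ x z - gaussKernel n σ x y) :=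
    Finset.sum_le_sum hpt
  have hnn : 0 ≤ ∑ x ∈ X, w x * ((‖y - x‖ ^ 2 - ‖z - x‖ ^ 2) / (2 * σ ^ 2)) := by
    have : ∑ x ∈ X, w x * ((‖y - x‖ ^ 2 - ‖z - x‖ ^ 2) / (2 * σ ^ 2))
        = (∑ x ∈ X, (w x * ‖y - x‖ ^ 2 - w x * ‖z - x‖ ^ 2)) / (2 * σ ^ 2) := by
      rw [Finset.sum_div]
      exact Finset.sum_congr rfl fun x _ => by field_simp
    rw [this]
    apply div_nonneg _ h2σ.le
    rw [Finset.sum_sub_distrib]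
    linarith
  have hdiff : 0 ≤ ∑ x ∈ X, (gaussKernel n σ x z - gaussKernel n σ x y) :=
    le_trans hnn hsum
  rw [Finset.sum_sub_distrib] at hdiff
  have hcard : (0:ℝ) ≤ (X.card : ℝ)⁻¹ := by positivity
  unfold kde
  apply mul_le_mul_of_nonneg_left _ hcard
  linarith

/-- Along the mean shift iterates `y_{i+1} = m(y_i)`, the densities `f(y_i)` form a
nondecreasing sequence, bounded above by `(2πσ²)^(−n/2)`, and hence convergent. -/
theorem kde_meanShift_iterates_converge (n : ℕ) (X : Finset (EuclideanSpace ℝ (Fin n)))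
    (hX : X.Nonempty) (σ : ℝ) (hσ : 0 < σ)
    (y : ℕ → EuclideanSpace ℝ (Fin n)) (hy : ∀ i, y (i + 1) = meanShift n σ X (y i)) :
    Monotone (fun i => kde n σ X (y i)) ∧
    (∀ i, kde n σ X (y i) ≤ (2 * Real.pi * σ ^ 2) ^ (-(n : ℝ) / 2)) ∧
    ∃ L : ℝ, Filter.Tendsto (fun i => kde n σ X (y i)) Filter.atTop (nhds L) := by
  have hc0 : (0:ℝ) < (2 * Real.pi * σ ^ 2) ^ (-(n : ℝ) / 2) :=
    Real.rpow_pos_of_pos (by positivity) _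
  have hmono : Monotone (fun i => kde n σ X (y i)) := by
    apply monotone_nat_of_le_succ
    intro i
    rw [hy i]
    exact kde_le_kde_meanShift n X hX σ hσ (y i)
  have hbdd : ∀ i, kde n σ X (y i) ≤ (2 * Real.pi * σ ^ 2) ^ (-(n : ℝ) / 2) := by
    intro i
    unfold kde
    have hcard : (0:ℝ) < (X.card : ℝ) := by
      exact_mod_cast Finset.card_pos.mpr hX
    have hterm : ∀ x ∈ X, gaussKernel n σ x (y i)
        ≤ (2 * Real.pi * σ ^ 2) ^ (-(n : ℝ) / 2) := by
      intro x _
      unfold gaussKernel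
      have : Real.exp (-‖y i - x‖ ^ 2 / (2 * σ ^ 2)) ≤ 1 := by
        rw [← Real.exp_zero]
        apply Real.exp_le_exp.mpr
        apply div_nonpos_of_nonpos_of_nonneg
        · exact neg_nonpos.mpr (sq_nonneg _)
        · positivity
      nlinarith
    calc (X.card : ℝ)⁻¹ * ∑ x ∈ X, gaussKernel n σ x (y i)
        ≤ (X.card : ℝ)⁻¹ * (X.card * (2 * Real.pi * σ ^ 2) ^ (-(n : ℝ) / 2)) := by
          apply mul_le_mul_of_nonneg_left _ (by positivity)
          simpa using Finset.sum_le_card_nsmul X _ _ hterm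
      _ = (2 * Real.pi * σ ^ 2) ^ (-(n : ℝ) / 2) := by
          field_simp
  refine ⟨hmono, hbdd, ?_⟩
  refine ⟨_, tendsto_atTop_ciSup hmono ⟨(2 * Real.pi * σ ^ 2) ^ (-(n : ℝ) / 2), ?_⟩⟩
  rintro r ⟨i, rfl⟩
  exact hbdd i
end
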